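/- arXiv:2407.19676 — 6 statements merged into one kernel-verified Lean document; each statement's English description precedes it below -/
import Mathlib

section
/- Let n be a positive integer, let x⋆ ∈ {0,1}^n, and let Q be a symmetric real n×n matrix with the x⋆-sign pattern, i.e., Q_{ij} > 0 whenever x⋆_i x⋆_j = 1 and Q_{ij} < 0 otherwise. Let x ∈ {0,1}^n and let k be an index with x_k = 1 and x⋆_k = 0. Then f_Q(flip_k(x)) > f_Q(x), where f_Q(x) = xᵀQx and flip_k(x) is x with its k-th coordinate flipped. -/
/-- UBQP objective `f_Q(x) = xᵀQx`. -/
def fQ {n : ℕ} (Q : Fin n → Fin n → ℝ) (x : Fin n → ℝ) : ℝ :=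
  ∑ i, ∑ j, Q i j * x i * x j

/-- `flipBit x k` is `x` with its `k`-th coordinate flipped (`0 ↔ 1` on binary vectors). -/
def flipBit {n : ℕ} (x : Fin n → ℝ) (k : Fin n) : Fin n → ℝ :=
  Function.update x k (1 - x k)

/-- `x` is a binary (0/1) vector. -/
def IsBinary {n : ℕ} (x : Fin n → ℝ) : Prop := ∀ i, x i = 0 ∨ x i = 1

/-- `Q` has the `x⋆`-sign pattern: `Q i j > 0` whenever `x⋆_i x⋆_j = 1`, and `Q i j < 0`
otherwise. -/
def SignPattern {n : ℕ} (xs : Fin n → ℝ) (Q : Fin n → Fin n → ℝ) : Prop :=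
  ∀ i j, (xs i * xs j = 1 → 0 < Q i j) ∧ (xs i * xs j ≠ 1 → Q i j < 0)

/-- turning off a bit outside the support of `x⋆` strictly increases the
objective of a matrix with the `x⋆`-sign pattern. -/
theorem flip_off_outside_support_improves {n : ℕ} (hn : 0 < n)
    (xs : Fin n → ℝ) (hxs : IsBinary xs)
    (Q : Fin n → Fin n → ℝ) (hQsymm : ∀ i j, Q i j = Q j i)
    (hQ : SignPattern xs Q)
    (x : Fin n → ℝ) (hx : IsBinary x)
    (k : Fin n) (hxk : x k = 1) (hxsk : xs k = 0) :
    fQ Q x < fQ Q (flipBit x k) := by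
  set y := flipBit x k with hy
  set s := Finset.univ.erase k with hs
  have hyk : y k = 0 := by simp [hy, flipBit, hxk]
  have hyi : ∀ i, i ≠ k → y i = x i := fun i hi => Function.update_of_ne hi _ _
  have hsum : ∀ (v : Fin n → ℝ), fQ Q v =
      (∑ i ∈ s, ∑ j ∈ s, Q i j * v i * v j)
      + ((∑ i ∈ s, Q i k * v i * v k)
      + ((∑ j ∈ s, Q k j * v k * v j)
      + Q k k * v k * v k)) := by
    intro v
    unfold fQ
    rw [← Finset.sum_erase_add _ _ (Finset.mem_univ k)]
    have h1 : ∀ i, ∑ j, Q i j * v i * v j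
        = (∑ j ∈ s, Q i j * v i * v j) + Q i k * v i * v k :=
      fun i => (Finset.sum_erase_add _ _ (Finset.mem_univ k)).symm
    simp_rw [h1]
    rw [Finset.sum_add_distrib]
    ring
  have hdd : (∑ i ∈ s, ∑ j ∈ s, Q i j * y i * y j)
      = ∑ i ∈ s, ∑ j ∈ s, Q i j * x i * x j := by
    refine Finset.sum_congr rfl fun i hi => Finset.sum_congr rfl fun j hj => ?_
    rw [hyi i (Finset.ne_of_mem_erase hi), hyi j (Finset.ne_of_mem_erase hj)]
  have hQneg : ∀ i, Q i k < 0 := fun i => (hQ i k).2 (by rw [hxsk]; simp)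
  have hQneg' : ∀ j, Q k j < 0 := fun j => (hQ k j).2 (by rw [hxsk]; simp)
  have hA : (∑ i ∈ s, Q i k * x i * x k) ≤ 0 := by
    refine Finset.sum_nonpos fun i _ => ?_
    rw [hxk, mul_one]
    exact mul_nonpos_of_nonpos_of_nonneg (le_of_lt (hQneg i))
      (by rcases hx i with h | h <;> rw [h] <;> norm_num)
  have hB : (∑ j ∈ s, Q k j * x k * x j) ≤ 0 := by
    refine Finset.sum_nonpos fun j _ => ?_
    rw [hxk, mul_one]
    exact mul_nonpos_of_nonpos_of_nonneg (le_of_lt (hQneg' j))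
      (by rcases hx j with h | h <;> rw [h] <;> norm_num)
  have hC : Q k k * x k * x k < 0 := by rw [hxk]; simpa using hQneg k
  have hfx := hsum x
  have hfy := hsum y
  rw [hdd, hyk] at hfy
  rw [hfx, hfy]
  simp only [mul_zero, zero_mul, add_zero, Finset.sum_const_zero]
  linarith
end

section
/- Let n be a positive integer, let x⋆ ∈ {0,1}^n, and let Q be a symmetric real n×n matrix with the x⋆-sign pattern, i.e., Q_{ij} > 0 whenever x⋆_i x⋆_j = 1 and Q_{ij} < 0 otherwise. Let x ∈ {0,1}^n satisfy x_i ≤ x⋆_i for all i (the support of x is contained in that of x⋆), and let k be an index with x_k = 0 and x⋆_k = 1. Then f_Q(flip_k(x)) > f_Q(x), where f_Q(x) = xᵀQx and flip_k(x) is x with its k-th coordinate flipped. -/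
/-- if the support of `x` is contained in that of `x⋆`, turning on a missing
support bit strictly increases the objective of a matrix with the `x⋆`-sign pattern. -/
theorem flip_on_missing_support_improves {n : ℕ} (hn : 0 < n)
    (xs : Fin n → ℝ) (hxs : IsBinary xs)
    (Q : Fin n → Fin n → ℝ) (hQsymm : ∀ i j, Q i j = Q j i)
    (hQ : SignPattern xs Q)
    (x : Fin n → ℝ) (hx : IsBinary x) (hsub : ∀ i, x i ≤ xs i)
    (k : Fin n) (hxk : x k = 0) (hxsk : xs k = 1) :
    fQ Q x < fQ Q (flipBit x k) := by
  classical
  set y := flipBit x k with hy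
  have hyi : ∀ i, y i = x i + (if i = k then 1 else 0) := by
    intro i
    by_cases h : i = k
    · subst h; simp [hy, flipBit, hxk]
    · simp [hy, flipBit, Function.update_of_ne h, h]
  have key : fQ Q y = fQ Q x + ((∑ i, Q i k * x i) + ((∑ j, Q k j * x j) + Q k k)) := by
    unfold fQ
    have hterm : ∀ i j, Q i j * y i * y j =
        Q i j * x i * x j + ((if j = k then Q i j * x i else 0)
          + ((if i = k then Q i j * x j else 0)
          + (if i = k then (if j = k then Q i j else 0) else 0))) := by
      intro i j
      rw [hyi i, hyi j]
      by_cases hik : i = k <;> by_cases hjk : j = k <;> simp [hik, hjk] <;> ring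
    have h4 : (∑ i : Fin n, ∑ j : Fin n, if i = k then Q i j * x j else 0)
        = ∑ j, Q k j * x j := by
      rw [Finset.sum_comm]
      simp [Finset.sum_ite_eq']
    have h5 : (∑ i : Fin n, ∑ j : Fin n,
        if i = k then (if j = k then Q i j else 0) else 0) = Q k k := by
      rw [Finset.sum_comm]
      simp [Finset.sum_ite_eq']
    simp only [hterm, Finset.sum_add_distrib, Finset.sum_ite_eq',
      Finset.mem_univ, if_true, h4, h5]
  have hnn : ∀ i, 0 ≤ Q i k * x i := by
    intro i
    rcases hx i with h0 | h1
    · simp [h0]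
    · have hxsi : xs i = 1 := by
        rcases hxs i with h | h
        · have := hsub i; rw [h, h1] at this; linarith
        · exact h
      have : 0 < Q i k := (hQ i k).1 (by rw [hxsi, hxsk]; ring)
      rw [h1, mul_one]; exact le_of_lt this
  have h1 : 0 ≤ ∑ i, Q i k * x i := Finset.sum_nonneg fun i _ => hnn i
  have h2 : 0 ≤ ∑ j, Q k j * x j := by
    apply Finset.sum_nonneg
    intro j _
    rw [hQsymm k j]
    exact hnn j
  have h3 : 0 < Q k k := (hQ k k).1 (by rw [hxsk]; ring)
  rw [key]
  linarith
end

section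
/- Let n be a positive integer, let x⋆ ∈ {0,1}^n, and let Q be a symmetric real n×n matrix with the x⋆-sign pattern, i.e., Q_{ij} > 0 whenever x⋆_i x⋆_j = 1 and Q_{ij} < 0 otherwise. Then for every x ∈ {0,1}^n with x ≠ x⋆ there exists an index k such that f_Q(flip_k(x)) > f_Q(x). Consequently, x⋆ is the unique 1-bit-flip local maximum of f_Q on {0,1}^n, i.e., x⋆ is the only point x satisfying f_Q(flip_k(x)) ≤ f_Q(x) for all k. -/
lemma fQ_decomp {n : ℕ} (Q : Fin n → Fin n → ℝ) (hQsymm : ∀ i j, Q i j = Q j i)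
    (x : Fin n → ℝ) (k : Fin n) :
    fQ Q x = Q k k * x k * x k
      + 2 * x k * (∑ j ∈ Finset.univ.erase k, Q k j * x j)
      + ∑ i ∈ Finset.univ.erase k, ∑ j ∈ Finset.univ.erase k, Q i j * x i * x j := by
  unfold fQ
  rw [← Finset.add_sum_erase _ _ (Finset.mem_univ k)]
  have h1 : ∑ j, Q k j * x k * x j
      = Q k k * x k * x k + ∑ j ∈ Finset.univ.erase k, Q k j * x k * x j := by
    rw [← Finset.add_sum_erase _ _ (Finset.mem_univ k)]
  have h2 : ∀ i ∈ Finset.univ.erase k, ∑ j, Q i j * x i * x j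
      = Q i k * x i * x k + ∑ j ∈ Finset.univ.erase k, Q i j * x i * x j := by
    intro i _
    rw [← Finset.add_sum_erase _ _ (Finset.mem_univ k)]
  rw [h1, Finset.sum_congr rfl h2, Finset.sum_add_distrib]
  have h3 : ∑ i ∈ Finset.univ.erase k, Q i k * x i * x k
      = x k * ∑ j ∈ Finset.univ.erase k, Q k j * x j := by
    rw [Finset.mul_sum]
    exact Finset.sum_congr rfl fun i _ => by rw [hQsymm i k]; ring
  have h4 : ∑ j ∈ Finset.univ.erase k, Q k j * x k * x j
      = x k * ∑ j ∈ Finset.univ.erase k, Q k j * x j := by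
    rw [Finset.mul_sum]
    exact Finset.sum_congr rfl fun i _ => by ring
  rw [h3, h4]; ring

lemma flip_diff {n : ℕ} (Q : Fin n → Fin n → ℝ) (hQsymm : ∀ i j, Q i j = Q j i)
    (x : Fin n → ℝ) (k : Fin n) :
    fQ Q (flipBit x k) - fQ Q x
      = (1 - 2 * x k) * (Q k k + 2 * ∑ j ∈ Finset.univ.erase k, Q k j * x j) := by
  have hyk : flipBit x k k = 1 - x k := Function.update_self _ _ _
  have hyj : ∀ j ∈ Finset.univ.erase k, flipBit x k j = x j := by
    intro j hj
    exact Function.update_of_ne (Finset.ne_of_mem_erase hj) _ _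
  rw [fQ_decomp Q hQsymm (flipBit x k) k, fQ_decomp Q hQsymm x k]
  have hS : ∑ j ∈ Finset.univ.erase k, Q k j * flipBit x k j
      = ∑ j ∈ Finset.univ.erase k, Q k j * x j :=
    Finset.sum_congr rfl fun j hj => by rw [hyj j hj]
  have hC : ∑ i ∈ Finset.univ.erase k, ∑ j ∈ Finset.univ.erase k,
        Q i j * flipBit x k i * flipBit x k j
      = ∑ i ∈ Finset.univ.erase k, ∑ j ∈ Finset.univ.erase k, Q i j * x i * x j :=
    Finset.sum_congr rfl fun i hi => Finset.sum_congr rfl fun j hj => by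
      rw [hyj i hi, hyj j hj]
  rw [hS, hC, hyk]; ring
/-- for a matrix with the `x⋆`-sign pattern, every binary `x ≠ x⋆` admits a
strictly improving one-bit flip; consequently `x⋆` is the unique 1-bit-flip local maximum. -/
theorem signPattern_unique_local_max {n : ℕ} (hn : 0 < n)
    (xs : Fin n → ℝ) (hxs : IsBinary xs)
    (Q : Fin n → Fin n → ℝ) (hQsymm : ∀ i j, Q i j = Q j i)
    (hQ : SignPattern xs Q) :
    (∀ x : Fin n → ℝ, IsBinary x → x ≠ xs → ∃ k, fQ Q x < fQ Q (flipBit x k)) ∧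
    (∀ k, fQ Q (flipBit xs k) ≤ fQ Q xs) ∧
    (∀ x : Fin n → ℝ, IsBinary x → (∀ k, fQ Q (flipBit x k) ≤ fQ Q x) → x = xs) := by
  have part1 : ∀ x : Fin n → ℝ, IsBinary x → x ≠ xs →
      ∃ k, fQ Q x < fQ Q (flipBit x k) := by
    intro x hx hne
    by_cases hA : ∃ k, x k = 1 ∧ xs k = 0
    · obtain ⟨k, hxk, hxsk⟩ := hA
      refine ⟨k, ?_⟩
      have hd := flip_diff Q hQsymm x k
      have hQkk : Q k k < 0 := (hQ k k).2 (by rw [hxsk]; norm_num)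
      have hS : ∑ j ∈ Finset.univ.erase k, Q k j * x j ≤ 0 := by
        apply Finset.sum_nonpos
        intro j _
        have hQkj : Q k j < 0 := (hQ k j).2 (by rw [hxsk]; norm_num)
        rcases hx j with h | h
        · rw [h, mul_zero]
        · rw [h, mul_one]; exact le_of_lt hQkj
      have key : fQ Q (flipBit x k) - fQ Q x
          = -(Q k k + 2 * ∑ j ∈ Finset.univ.erase k, Q k j * x j) := by
        rw [hd, hxk]; ring
      linarith
    · push_neg at hA
      have hsub : ∀ j, x j = 1 → xs j = 1 := by
        intro j hj
        rcases hxs j with h | h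
        · exact absurd h (hA j hj)
        · exact h
      obtain ⟨k, hk⟩ := Function.ne_iff.mp hne
      have hxk : x k = 0 := by
        rcases hx k with h | h
        · exact h
        · exact absurd (h.trans (hsub k h).symm) hk
      have hxsk : xs k = 1 := by
        rcases hxs k with h | h
        · exact absurd (hxk.trans h.symm) hk
        · exact h
      refine ⟨k, ?_⟩
      have hd := flip_diff Q hQsymm x k
      have hQkk : 0 < Q k k := (hQ k k).1 (by rw [hxsk]; norm_num)
      have hS : 0 ≤ ∑ j ∈ Finset.univ.erase k, Q k j * x j := by
        apply Finset.sum_nonneg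
        intro j _
        rcases hx j with h | h
        · rw [h, mul_zero]
        · rw [h, mul_one]
          exact le_of_lt ((hQ k j).1 (by rw [hxsk, hsub j h]; norm_num))
      have key : fQ Q (flipBit x k) - fQ Q x
          = Q k k + 2 * ∑ j ∈ Finset.univ.erase k, Q k j * x j := by
        rw [hd, hxk]; ring
      linarith
  refine ⟨part1, ?_, ?_⟩
  · intro k
    have hd := flip_diff Q hQsymm xs k
    rcases hxs k with h0 | h1
    · have hQkk : Q k k < 0 := (hQ k k).2 (by rw [h0]; norm_num)
      have hS : ∑ j ∈ Finset.univ.erase k, Q k j * xs j ≤ 0 := by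
        apply Finset.sum_nonpos
        intro j _
        have hQkj : Q k j < 0 := (hQ k j).2 (by rw [h0]; norm_num)
        rcases hxs j with h | h
        · rw [h, mul_zero]
        · rw [h, mul_one]; exact le_of_lt hQkj
      have key : fQ Q (flipBit xs k) - fQ Q xs
          = Q k k + 2 * ∑ j ∈ Finset.univ.erase k, Q k j * xs j := by
        rw [hd, h0]; ring
      linarith
    · have hQkk : 0 < Q k k := (hQ k k).1 (by rw [h1]; norm_num)
      have hS : 0 ≤ ∑ j ∈ Finset.univ.erase k, Q k j * xs j := by
        apply Finset.sum_nonneg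
        intro j _
        rcases hxs j with h | h
        · rw [h, mul_zero]
        · rw [h, mul_one]
          exact le_of_lt ((hQ k j).1 (by rw [h1, h]; norm_num))
      have key : fQ Q (flipBit xs k) - fQ Q xs
          = -(Q k k + 2 * ∑ j ∈ Finset.univ.erase k, Q k j * xs j) := by
        rw [hd, h1]; ring
      linarith
  · intro x hx hmax
    by_contra hne
    obtain ⟨k, hk⟩ := part1 x hx hne
    exact absurd (hmax k) (not_le.mpr hk)
end

section
/- Let n be a positive integer, let x⋆ ∈ {0,1}^n, and let Q be a symmetric real n×n matrix with the x⋆-sign pattern, i.e., Q_{ij} > 0 whenever x⋆_i x⋆_j = 1 and Q_{ij} < 0 otherwise. Then for every x ∈ {0,1}^n there exists a sequence x = x^(0), x^(1), …, x^(d) = x⋆, where d is the Hamming distance between x and x⋆, such that each x^(t+1) is obtained from x^(t) by flipping a single coordinate and f_Q(x^(t+1)) > f_Q(x^(t)) for all 0 ≤ t < d. -/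
lemma fQ_split {n : ℕ} (Q : Fin n → Fin n → ℝ) (z : Fin n → ℝ) (k : Fin n) :
    fQ Q z = Q k k * z k * z k
      + z k * (∑ j ∈ Finset.univ.erase k, Q k j * z j)
      + (∑ i ∈ Finset.univ.erase k, Q i k * z i) * z k
      + ∑ i ∈ Finset.univ.erase k, ∑ j ∈ Finset.univ.erase k, Q i j * z i * z j := by
  have hA : ∑ i ∈ Finset.univ.erase k, Q i k * z i * z k
      = (∑ i ∈ Finset.univ.erase k, Q i k * z i) * z k := by
    rw [Finset.sum_mul]
  have hB : ∑ j ∈ Finset.univ.erase k, Q k j * z k * z j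
      = z k * ∑ j ∈ Finset.univ.erase k, Q k j * z j := by
    rw [Finset.mul_sum]; exact Finset.sum_congr rfl fun j _ => by ring
  calc fQ Q z = ∑ i, (Q i k * z i * z k + ∑ j ∈ Finset.univ.erase k, Q i j * z i * z j) :=
        Finset.sum_congr rfl fun i _ => (Finset.add_sum_erase _ _ (Finset.mem_univ k)).symm
    _ = (∑ i, Q i k * z i * z k) + ∑ i, ∑ j ∈ Finset.univ.erase k, Q i j * z i * z j :=
        Finset.sum_add_distrib
    _ = (Q k k * z k * z k + ∑ i ∈ Finset.univ.erase k, Q i k * z i * z k)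
        + ((∑ j ∈ Finset.univ.erase k, Q k j * z k * z j)
          + ∑ i ∈ Finset.univ.erase k, ∑ j ∈ Finset.univ.erase k, Q i j * z i * z j) := by
        rw [← Finset.add_sum_erase _ (fun i => Q i k * z i * z k) (Finset.mem_univ k),
            ← Finset.add_sum_erase _ (fun i => ∑ j ∈ Finset.univ.erase k, Q i j * z i * z j)
              (Finset.mem_univ k)]
    _ = _ := by rw [hA, hB]; ring

lemma fQ_flip {n : ℕ} (Q : Fin n → Fin n → ℝ) (hQsymm : ∀ i j, Q i j = Q j i)
    (y : Fin n → ℝ) (k : Fin n) :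
    fQ Q (flipBit y k) = fQ Q y
      + (1 - 2 * y k) * (Q k k + 2 * ∑ j ∈ Finset.univ.erase k, Q k j * y j) := by
  have hk : flipBit y k k = 1 - y k := Function.update_self _ _ _
  have hj : ∀ j ∈ Finset.univ.erase k, flipBit y k j = y j := fun j hj =>
    Function.update_of_ne (Finset.ne_of_mem_erase hj) _ _
  rw [fQ_split Q (flipBit y k) k, fQ_split Q y k, hk]
  have e1 : ∑ j ∈ Finset.univ.erase k, Q k j * flipBit y k j
      = ∑ j ∈ Finset.univ.erase k, Q k j * y j :=
    Finset.sum_congr rfl fun j h => by rw [hj j h]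
  have e2 : ∑ i ∈ Finset.univ.erase k, Q i k * flipBit y k i
      = ∑ i ∈ Finset.univ.erase k, Q k i * y i :=
    Finset.sum_congr rfl fun i h => by rw [hj i h, hQsymm]
  have e2' : ∑ i ∈ Finset.univ.erase k, Q i k * y i
      = ∑ i ∈ Finset.univ.erase k, Q k i * y i :=
    Finset.sum_congr rfl fun i _ => by rw [hQsymm]
  have e3 : ∑ i ∈ Finset.univ.erase k, ∑ j ∈ Finset.univ.erase k,
        Q i j * flipBit y k i * flipBit y k j
      = ∑ i ∈ Finset.univ.erase k, ∑ j ∈ Finset.univ.erase k, Q i j * y i * y j :=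
    Finset.sum_congr rfl fun i hi => Finset.sum_congr rfl fun j hjm => by rw [hj i hi, hj j hjm]
  rw [e1, e2, e2', e3]
  ring

lemma step_lemma {n : ℕ} (xs : Fin n → ℝ) (hxs : IsBinary xs)
    (Q : Fin n → Fin n → ℝ) (hQsymm : ∀ i j, Q i j = Q j i) (hQ : SignPattern xs Q)
    (y : Fin n → ℝ) (hy : IsBinary y) (hne : y ≠ xs) :
    ∃ k, y k ≠ xs k ∧ fQ Q y < fQ Q (flipBit y k) := by
  by_cases hA : ∃ k, y k = 1 ∧ xs k = 0
  · obtain ⟨k, hyk, hxk⟩ := hA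
    refine ⟨k, by rw [hyk, hxk]; norm_num, ?_⟩
    rw [fQ_flip Q hQsymm y k, hyk]
    have hkk : Q k k < 0 := (hQ k k).2 (by rw [hxk]; norm_num)
    have hS : ∑ j ∈ Finset.univ.erase k, Q k j * y j ≤ 0 := by
      apply Finset.sum_nonpos
      intro j _
      have hQkj : Q k j < 0 := (hQ k j).2 (by rw [hxk]; norm_num)
      rcases hy j with h | h <;> rw [h] <;> nlinarith
    nlinarith
  · push_neg at hA
    have hones : ∀ j, y j = 1 → xs j = 1 := by
      intro j hj
      rcases hxs j with h | h
      · exact absurd h (hA j hj)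
      · exact h
    obtain ⟨k, hk⟩ : ∃ k, y k ≠ xs k := by
      by_contra h; push_neg at h; exact hne (funext h)
    have hyk : y k = 0 := by
      rcases hy k with h | h
      · exact h
      · exact absurd (hones k h) (by rw [h] at hk; exact Ne.symm hk)
    have hxk : xs k = 1 := by
      rcases hxs k with h | h
      · exact absurd (hyk.trans h.symm) hk
      · exact h
    refine ⟨k, hk, ?_⟩
    rw [fQ_flip Q hQsymm y k, hyk]
    have hkk : 0 < Q k k := (hQ k k).1 (by rw [hxk]; ring)
    have hS : 0 ≤ ∑ j ∈ Finset.univ.erase k, Q k j * y j := by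
      apply Finset.sum_nonneg
      intro j _
      rcases hy j with h | h
      · rw [h]; simp
      · have : 0 < Q k j := (hQ k j).1 (by rw [hxk, hones j h]; ring)
        nlinarith
    nlinarith

lemma flip_binary {n : ℕ} (y : Fin n → ℝ) (hy : IsBinary y) (k : Fin n) :
    IsBinary (flipBit y k) := by
  intro i
  by_cases h : i = k
  · subst h
    rw [flipBit, Function.update_self]
    rcases hy i with h | h <;> rw [h] <;> norm_num
  · rw [flipBit, Function.update_of_ne h]; exact hy i

lemma flip_diff_s5 {n : ℕ} (xs y : Fin n → ℝ) (hxs : IsBinary xs) (hy : IsBinary y)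
    (k : Fin n) (hk : y k ≠ xs k) :
    (Finset.univ.filter fun i => flipBit y k i ≠ xs i)
      = (Finset.univ.filter fun i => y i ≠ xs i).erase k := by
  ext i
  simp only [Finset.mem_filter, Finset.mem_erase, Finset.mem_univ, true_and]
  by_cases h : i = k
  · subst h
    rw [flipBit, Function.update_self]
    have hxi : xs i = 1 - y i := by
      rcases hy i with h | h <;> rcases hxs i with h' | h' <;> rw [h, h'] at hk ⊢ <;>
        first | exact absurd rfl hk | norm_num
    constructor
    · intro hc; exact absurd hxi.symm hc
    · rintro ⟨h, -⟩; exact absurd rfl h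
  · rw [flipBit, Function.update_of_ne h]
    tauto

lemma path_lemma {n : ℕ} (xs : Fin n → ℝ) (hxs : IsBinary xs)
    (Q : Fin n → Fin n → ℝ) (hQsymm : ∀ i j, Q i j = Q j i) (hQ : SignPattern xs Q) :
    ∀ d (y : Fin n → ℝ), IsBinary y →
      (Finset.univ.filter fun i => y i ≠ xs i).card = d →
      ∃ p : ℕ → (Fin n → ℝ), p 0 = y ∧ p d = xs ∧
        ∀ t < d, ∃ k, p (t + 1) = flipBit (p t) k ∧ fQ Q (p t) < fQ Q (p (t + 1)) := by
  intro d
  induction d with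
  | zero =>
    intro y _ hcard
    have : y = xs := by
      funext i
      by_contra h
      have : i ∈ Finset.univ.filter fun i => y i ≠ xs i := by
        simp [h]
      rw [Finset.card_eq_zero.mp hcard] at this
      exact absurd this (Finset.notMem_empty i)
    exact ⟨fun _ => xs, this ▸ rfl, rfl, fun t ht => absurd ht (Nat.not_lt_zero t)⟩
  | succ d ih =>
    intro y hy hcard
    have hne : y ≠ xs := by
      intro h
      subst h
      simp at hcard
    obtain ⟨k, hk, hlt⟩ := step_lemma xs hxs Q hQsymm hQ y hy hne
    have hkmem : k ∈ Finset.univ.filter fun i => y i ≠ xs i := by simp [hk]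
    have hcard' : (Finset.univ.filter fun i => flipBit y k i ≠ xs i).card = d := by
      rw [flip_diff_s5 xs y hxs hy k hk, Finset.card_erase_of_mem hkmem, hcard]
      omega
    obtain ⟨p', hp0, hpd, hstep⟩ := ih (flipBit y k) (flip_binary y hy k) hcard'
    refine ⟨fun t => match t with | 0 => y | t + 1 => p' t, rfl, hpd, ?_⟩
    intro t ht
    match t with
    | 0 =>
      refine ⟨k, ?_, ?_⟩
      · show p' 0 = flipBit y k
        rw [hp0]
      · show fQ Q y < fQ Q (p' 0)
        rw [hp0]; exact hlt
    | t + 1 => exact hstep t (Nat.lt_of_succ_lt_succ ht)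

open Classical in
/-- from any binary `x` there is a strictly improving 1-bit-flip path of length
exactly the Hamming distance from `x` to `x⋆`, ending at `x⋆`. -/
theorem signPattern_improving_path {n : ℕ} (hn : 0 < n)
    (xs : Fin n → ℝ) (hxs : IsBinary xs)
    (Q : Fin n → Fin n → ℝ) (hQsymm : ∀ i j, Q i j = Q j i)
    (hQ : SignPattern xs Q)
    (x : Fin n → ℝ) (hx : IsBinary x) :
    ∃ p : ℕ → (Fin n → ℝ),
      p 0 = x ∧
      p ((Finset.univ.filter fun i => x i ≠ xs i).card) = xs ∧
      ∀ t < (Finset.univ.filter fun i => x i ≠ xs i).card,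
        ∃ k, p (t + 1) = flipBit (p t) k ∧ fQ Q (p t) < fQ Q (p (t + 1)) := by
  exact path_lemma xs hxs Q hQsymm hQ _ x hx rfl
end

section
/- Let n be a positive integer and x⋆ ∈ {0,1}^n, and define the n×n matrix Q̂¹ by Q̂¹_{ij} = 1 if x⋆_i x⋆_j = 1 and Q̂¹_{ij} = −1 otherwise. Then Q̂¹ is symmetric, and x⋆ is both the unique 1-bit-flip local maximum and the unique global maximum over {0,1}^n of f̂¹(x) = xᵀQ̂¹x; moreover the maximum value equals (∑_{i=1}^n x⋆_i)². -/
/-- The toy matrix `Q̂¹` ("construct by ±1"): entry `1` if `x⋆_i x⋆_j = 1`, else `-1`. -/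
noncomputable def Qhat1 {n : ℕ} (xs : Fin n → ℝ) : Fin n → Fin n → ℝ :=
  fun i j => if xs i * xs j = 1 then 1 else -1

lemma Qhat1_eq {n : ℕ} {xs : Fin n → ℝ} (hxs : IsBinary xs) (i j : Fin n) :
    Qhat1 xs i j = 2 * xs i * xs j - 1 := by
  unfold Qhat1
  rcases hxs i with h | h <;> rcases hxs j with h' | h' <;> simp [h, h'] <;> norm_num

lemma fQ_formula {n : ℕ} {xs : Fin n → ℝ} (hxs : IsBinary xs) (x : Fin n → ℝ) :
    fQ (Qhat1 xs) x = 2 * (∑ i, x i * xs i) ^ 2 - (∑ i, x i) ^ 2 := by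
  unfold fQ
  have : ∀ i j : Fin n, Qhat1 xs i j * x i * x j
      = 2 * ((x i * xs i) * (x j * xs j)) - (x i * x j) := by
    intro i j; rw [Qhat1_eq hxs]; ring
  simp only [this, Finset.sum_sub_distrib, ← Finset.mul_sum, ← Finset.sum_mul]
  ring

lemma sum_update {n : ℕ} (f : Fin n → ℝ) (k : Fin n) (v : ℝ) :
    ∑ i, Function.update f k v i = (∑ i, f i) + (v - f k) := by
  rw [Finset.sum_update_of_mem (Finset.mem_univ k), Finset.sdiff_singleton_eq_erase,
    ← Finset.add_sum_erase _ f (Finset.mem_univ k)]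
  ring

lemma sum_flip {n : ℕ} (x : Fin n → ℝ) (k : Fin n) :
    ∑ i, flipBit x k i = (∑ i, x i) + (1 - 2 * x k) := by
  unfold flipBit; rw [sum_update]; ring

lemma sum_flip_mul {n : ℕ} (x xs : Fin n → ℝ) (k : Fin n) :
    ∑ i, flipBit x k i * xs i = (∑ i, x i * xs i) + (1 - 2 * x k) * xs k := by
  have : ∀ i, flipBit x k i * xs i = Function.update (fun i => x i * xs i) k ((1 - x k) * xs k) i := by
    intro i
    by_cases h : i = k
    · subst h; simp [flipBit]
    · simp [flipBit, Function.update_of_ne h]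
  simp only [this]
  rw [sum_update]; ring

/-- `Q̂¹` is symmetric, `x⋆` is its unique 1-bit-flip local maximum and its
unique global maximum over `{0,1}^n`, and the maximum value is `(∑ i, x⋆_i)²`. -/
theorem Qhat1_unimodal {n : ℕ} (hn : 0 < n)
    (xs : Fin n → ℝ) (hxs : IsBinary xs) :
    (∀ i j, Qhat1 xs i j = Qhat1 xs j i) ∧
    (∀ k, fQ (Qhat1 xs) (flipBit xs k) ≤ fQ (Qhat1 xs) xs) ∧
    (∀ x : Fin n → ℝ, IsBinary x →
      (∀ k, fQ (Qhat1 xs) (flipBit x k) ≤ fQ (Qhat1 xs) x) → x = xs) ∧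
    (∀ x : Fin n → ℝ, IsBinary x → x ≠ xs → fQ (Qhat1 xs) x < fQ (Qhat1 xs) xs) ∧
    fQ (Qhat1 xs) xs = (∑ i, xs i) ^ 2 := by
  set s : ℝ := ∑ i, xs i with hs
  have hs0 : 0 ≤ s := Finset.sum_nonneg fun i _ => by rcases hxs i with h | h <;> simp [h]
  have hxsxs : (∑ i, xs i * xs i) = s := by
    apply Finset.sum_congr rfl; intro i _
    rcases hxs i with h | h <;> simp [h]
  have hfxs : fQ (Qhat1 xs) xs = s ^ 2 := by
    rw [fQ_formula hxs, hxsxs]; ring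
  -- bounds for a generic binary x
  have key : ∀ x : Fin n → ℝ, IsBinary x →
      0 ≤ (∑ i, x i * xs i) ∧ (∑ i, x i * xs i) ≤ (∑ i, x i) ∧ (∑ i, x i * xs i) ≤ s := by
    intro x hx
    refine ⟨Finset.sum_nonneg fun i _ => ?_, Finset.sum_le_sum fun i _ => ?_, Finset.sum_le_sum fun i _ => ?_⟩
    · rcases hx i with h | h <;> rcases hxs i with h' | h' <;> simp [h, h']
    · rcases hx i with h | h <;> rcases hxs i with h' | h' <;> simp [h, h']
    · rcases hx i with h | h <;> rcases hxs i with h' | h' <;> simp [h, h']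
  refine ⟨?_, ?_, ?_, ?_, hfxs⟩
  · intro i j; unfold Qhat1; rw [mul_comm]
  · -- xs is a local max
    intro k
    rw [hfxs, fQ_formula hxs, sum_flip, sum_flip_mul, hxsxs, ← hs]
    rcases hxs k with h | h
    · simp only [h]; nlinarith
    · simp only [h]
      have : (1:ℝ) ≤ s := by
        have := Finset.single_le_sum (f := xs) (fun i _ => by rcases hxs i with h' | h' <;> simp [h']) (Finset.mem_univ k)
        rw [h] at this; linarith
      nlinarith
  · -- unique local max
    intro x hx hloc
    by_contra hne
    set a : ℝ := ∑ i, x i * xs i with ha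
    set b : ℝ := ∑ i, x i with hb
    obtain ⟨ha0, hab, has⟩ := key x hx
    -- step 1: no i with x i = 1, xs i = 0
    have step1 : ∀ i, ¬(x i = 1 ∧ xs i = 0) := by
      intro i ⟨h1, h0⟩
      have hi := hloc i
      rw [fQ_formula hxs, fQ_formula hxs, sum_flip, sum_flip_mul, ← ha, ← hb, h1, h0] at hi
      have hb1 : (1:ℝ) ≤ b := by
        have := Finset.single_le_sum (f := x) (fun j _ => by rcases hx j with h' | h' <;> simp [h']) (Finset.mem_univ i)
        rw [h1] at this; exact this
      nlinarith
    -- hence a = b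
    have haeb : a = b := by
      rw [ha, hb]
      apply Finset.sum_congr rfl; intro i _
      rcases hx i with h | h
      · simp [h]
      · rcases hxs i with h' | h'
        · exact absurd ⟨h, h'⟩ (step1 i)
        · simp [h, h']
    -- step 2: no i with x i = 0, xs i = 1
    have step2 : ∀ i, ¬(x i = 0 ∧ xs i = 1) := by
      intro i ⟨h0, h1⟩
      have hi := hloc i
      rw [fQ_formula hxs, fQ_formula hxs, sum_flip, sum_flip_mul, ← ha, ← hb, h0, h1] at hi
      nlinarith
    apply hne
    funext i
    rcases hx i with h | h <;> rcases hxs i with h' | h'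
    · rw [h, h']
    · exact absurd ⟨h, h'⟩ (step2 i)
    · exact absurd ⟨h, h'⟩ (step1 i)
    · rw [h, h']
  · -- unique global max
    intro x hx hne
    rw [hfxs, fQ_formula hxs]
    set a : ℝ := ∑ i, x i * xs i with ha
    set b : ℝ := ∑ i, x i with hb
    obtain ⟨ha0, hab, has⟩ := key x hx
    have : a < b ∨ a < s := by
      obtain ⟨i, hi⟩ : ∃ i, x i ≠ xs i := by
        by_contra h; push_neg at h; exact hne (funext h)
      rcases hx i with h | h <;> rcases hxs i with h' | h'
      · exact absurd (h.trans h'.symm) hi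
      · right
        have : s - a = ∑ j, (xs j - x j * xs j) := by rw [hs, ha, Finset.sum_sub_distrib]
        have hterm : ∀ j ∈ Finset.univ, (0:ℝ) ≤ xs j - x j * xs j := by
          intro j _; rcases hx j with g | g <;> rcases hxs j with g' | g' <;> simp [g, g']
        have h1 : (1:ℝ) ≤ s - a := by
          rw [this]
          have := Finset.single_le_sum hterm (Finset.mem_univ i)
          rw [h, h'] at this; simpa using this
        linarith
      · left
        have : b - a = ∑ j, (x j - x j * xs j) := by rw [hb, ha, Finset.sum_sub_distrib]
        have hterm : ∀ j ∈ Finset.univ, (0:ℝ) ≤ x j - x j * xs j := by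
          intro j _; rcases hx j with g | g <;> rcases hxs j with g' | g' <;> simp [g, g']
        have h1 : (1:ℝ) ≤ b - a := by
          rw [this]
          have := Finset.single_le_sum hterm (Finset.mem_univ i)
          rw [h, h'] at this; simpa using this
        linarith
      · exact absurd (h.trans h'.symm) hi
    rcases this with h | h
    · nlinarith
    · nlinarith
end

section
/- Let n be a positive integer, let x⋆ ∈ {0,1}^n, let Q be any symmetric real n×n matrix, let Q̂ be a symmetric real n×n matrix with the x⋆-sign pattern (Q̂_{ij} > 0 whenever x⋆_i x⋆_j = 1 and Q̂_{ij} < 0 otherwise), and let α > 0. Then there exists λ₀ ∈ [0, 1) such that for every λ ∈ (λ₀, 1], the matrix Q_λ = (1 − λ)Q + λαQ̂ has the x⋆-sign pattern, and consequently x⋆ is the unique 1-bit-flip local maximum and the unique global maximum over {0,1}^n of the smoothed objective g_λ(x) = (1 − λ) xᵀQx + λα xᵀQ̂x. -/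
lemma fQ_update {n : ℕ} (M : Fin n → Fin n → ℝ) (x : Fin n → ℝ) (k : Fin n) (c : ℝ) :
    fQ M (Function.update x k c) =
      M k k * c * c + (∑ j ∈ Finset.univ.erase k, (M k j + M j k) * x j) * c
        + ∑ i ∈ Finset.univ.erase k, ∑ j ∈ Finset.univ.erase k, M i j * x i * x j := by
  have hu : ∀ j, j ≠ k → Function.update x k c j = x j := fun j hj => Function.update_of_ne hj _ _
  unfold fQ
  rw [← Finset.sum_erase_add _ _ (Finset.mem_univ k)]
  have h1 : ∀ i ∈ Finset.univ.erase k,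
      (∑ j, M i j * Function.update x k c i * Function.update x k c j)
        = M i k * x i * c + ∑ j ∈ Finset.univ.erase k, M i j * x i * x j := by
    intro i hi
    have hik := Finset.ne_of_mem_erase hi
    rw [← Finset.sum_erase_add _ _ (Finset.mem_univ k), Function.update_self, hu i hik]
    rw [Finset.sum_congr rfl (fun j hj => by rw [hu j (Finset.ne_of_mem_erase hj)])]
    ring
  rw [Finset.sum_congr rfl h1]
  have h2 : (∑ j, M k j * Function.update x k c k * Function.update x k c j)
      = M k k * c * c + ∑ j ∈ Finset.univ.erase k, M k j * c * x j := by
    rw [← Finset.sum_erase_add _ _ (Finset.mem_univ k), Function.update_self]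
    rw [Finset.sum_congr rfl (fun j hj => by rw [hu j (Finset.ne_of_mem_erase hj)])]
    ring
  rw [h2, Finset.sum_mul]
  have h3 : ∑ j ∈ Finset.univ.erase k, (M k j + M j k) * x j * c
      = ∑ j ∈ Finset.univ.erase k, M k j * c * x j
        + ∑ j ∈ Finset.univ.erase k, M j k * x j * c := by
    rw [← Finset.sum_add_distrib]; exact Finset.sum_congr rfl (fun j _ => by ring)
  rw [Finset.sum_add_distrib, h3]; ring

lemma binary_nonneg {n : ℕ} {x : Fin n → ℝ} (hx : IsBinary x) (i : Fin n) : 0 ≤ x i := by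
  rcases hx i with h | h <;> simp [h]

/-- Key improvement lemma: any binary `x ≠ xs` has a strictly improving flip toward `xs`. -/
lemma improve {n : ℕ} {xs : Fin n → ℝ} (hxs : IsBinary xs)
    {M : Fin n → Fin n → ℝ} (hM : SignPattern xs M)
    {x : Fin n → ℝ} (hx : IsBinary x) (hne : x ≠ xs) :
    ∃ k, x k ≠ xs k ∧ (flipBit x k) k = xs k ∧ fQ M x < fQ M (flipBit x k) := by
  have key : ∀ k, x k ≠ xs k →
      ((xs k = 0) ∨ (xs k = 1 ∧ ∀ j, x j = 1 → xs j = 1)) →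
      fQ M x < fQ M (flipBit x k) := by
    intro k hk hcase
    have hflip : flipBit x k = Function.update x k (1 - x k) := rfl
    have hxeq : x = Function.update x k (x k) := (Function.update_eq_self k x).symm
    have e1 : fQ M x = M k k * x k * x k
        + (∑ j ∈ Finset.univ.erase k, (M k j + M j k) * x j) * x k
        + ∑ i ∈ Finset.univ.erase k, ∑ j ∈ Finset.univ.erase k, M i j * x i * x j := by
      conv_lhs => rw [hxeq]
      exact fQ_update M x k (x k)
    have e2 : fQ M (flipBit x k) = M k k * (1 - x k) * (1 - x k)
        + (∑ j ∈ Finset.univ.erase k, (M k j + M j k) * x j) * (1 - x k)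
        + ∑ i ∈ Finset.univ.erase k, ∑ j ∈ Finset.univ.erase k, M i j * x i * x j :=
      fQ_update M x k (1 - x k)
    set B := ∑ j ∈ Finset.univ.erase k, (M k j + M j k) * x j with hB
    rcases hcase with h0 | ⟨h1, hle⟩
    · -- xs k = 0, so x k = 1, flip to 0; need M k k + B < 0
      have hxk : x k = 1 := (hx k).resolve_left (fun h => hk (by rw [h, h0]))
      have hMkk : M k k < 0 := (hM k k).2 (by rw [h0]; norm_num)
      have hBle : B ≤ 0 := by
        apply Finset.sum_nonpos
        intro j _
        have h1 : M k j < 0 := (hM k j).2 (by rw [h0]; norm_num)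
        have h2 : M j k < 0 := (hM j k).2 (by rw [h0]; norm_num)
        have := binary_nonneg hx j
        nlinarith
      rw [e1, e2, hxk]
      nlinarith
    · -- xs k = 1, x k = 0, flip to 1; need M k k + B > 0
      have hxk : x k = 0 := (hx k).resolve_right (fun h => hk (by rw [h, h1]))
      have hMkk : 0 < M k k := (hM k k).1 (by rw [h1]; ring)
      have hBge : 0 ≤ B := by
        apply Finset.sum_nonneg
        intro j _
        rcases hx j with h | h
        · simp [h]
        · have hxsj := hle j h
          have p1 : 0 < M k j := (hM k j).1 (by rw [h1, hxsj]; ring)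
          have p2 : 0 < M j k := (hM j k).1 (by rw [h1, hxsj]; ring)
          nlinarith
      rw [e1, e2, hxk]
      nlinarith
  by_cases hA : ∃ k, x k = 1 ∧ xs k = 0
  · obtain ⟨k, hxk, hxsk⟩ := hA
    have hk : x k ≠ xs k := by rw [hxk, hxsk]; norm_num
    refine ⟨k, hk, ?_, key k hk (Or.inl hxsk)⟩
    simp [flipBit, Function.update_self, hxk, hxsk]
  · push_neg at hA
    have hle : ∀ j, x j = 1 → xs j = 1 := by
      intro j hj
      rcases hxs j with h | h
      · exact absurd h (hA j hj)
      · exact h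
    obtain ⟨k, hk⟩ := Function.ne_iff.mp hne
    have hxsk : xs k = 1 := by
      rcases hxs k with h | h
      · rcases hx k with h' | h'
        · exact absurd (h'.trans h.symm) hk
        · exact absurd h (hA k h')
      · exact h
    refine ⟨k, hk, ?_, key k hk (Or.inr ⟨hxsk, hle⟩)⟩
    have hxk : x k = 0 := by
      rcases hx k with h | h
      · exact h
      · exact absurd (h.trans hxsk.symm) hk
    simp [flipBit, Function.update_self, hxk, hxsk]

lemma flipBit_binary {n : ℕ} {x : Fin n → ℝ} (hx : IsBinary x) (k : Fin n) :
    IsBinary (flipBit x k) := by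
  intro i
  by_cases h : i = k
  · subst h
    rcases hx i with h | h <;> simp [flipBit, Function.update_self, h]
  · rw [flipBit, Function.update_of_ne h]; exact hx i

/-- Strict global maximality of xs. -/
lemma global_strict {n : ℕ} {xs : Fin n → ℝ} (hxs : IsBinary xs)
    {M : Fin n → Fin n → ℝ} (hM : SignPattern xs M)
    {x : Fin n → ℝ} (hx : IsBinary x) (hne : x ≠ xs) :
    fQ M x < fQ M xs := by
  have main : ∀ d : ℕ, ∀ x : Fin n → ℝ, IsBinary x → x ≠ xs →
      (Finset.univ.filter (fun i => x i ≠ xs i)).card ≤ d → fQ M x < fQ M xs := by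
    intro d
    induction d with
    | zero =>
      intro x hx hne hcard
      exfalso
      apply hne
      funext i
      by_contra hi
      have : i ∈ Finset.univ.filter (fun i => x i ≠ xs i) := by simp [hi]
      have := Finset.card_pos.mpr ⟨i, this⟩
      omega
    | succ d ih =>
      intro x hx hne hcard
      obtain ⟨k, hk, hflipk, hlt⟩ := improve hxs hM hx hne
      set y := flipBit x k with hy
      have hyb : IsBinary y := flipBit_binary hx k
      by_cases hyx : y = xs
      · rw [← hyx]; exact hlt
      · refine lt_trans hlt (ih y hyb hyx ?_)
        have hsub : (Finset.univ.filter (fun i => y i ≠ xs i))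
            ⊆ (Finset.univ.filter (fun i => x i ≠ xs i)).erase k := by
          intro i hi
          simp only [Finset.mem_filter, Finset.mem_univ, true_and] at hi
          have hik : i ≠ k := by
            intro h; subst h; exact hi hflipk
          rw [Finset.mem_erase]
          refine ⟨hik, ?_⟩
          simp only [Finset.mem_filter, Finset.mem_univ, true_and]
          rwa [hy, flipBit, Function.update_of_ne hik] at hi
        have hkmem : k ∈ Finset.univ.filter (fun i => x i ≠ xs i) := by simp [hk]
        have := Finset.card_le_card hsub
        have := Finset.card_erase_of_mem hkmem
        omega
  exact main _ x hx hne le_rfl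

lemma fQ_combine {n : ℕ} (Q Qhat : Fin n → Fin n → ℝ) (a b : ℝ) (x : Fin n → ℝ) :
    fQ (fun i j => a * Q i j + b * Qhat i j) x = a * fQ Q x + b * fQ Qhat x := by
  unfold fQ
  rw [Finset.mul_sum, Finset.mul_sum, ← Finset.sum_add_distrib]
  refine Finset.sum_congr rfl (fun i _ => ?_)
  rw [Finset.mul_sum, Finset.mul_sum, ← Finset.sum_add_distrib]
  exact Finset.sum_congr rfl (fun j _ => by ring)

/-- HC transformation: for any symmetric `Q`, any symmetric `Q̂` with the
`x⋆`-sign pattern and any `α > 0`, there is `λ₀ ∈ [0,1)` such that for all `λ ∈ (λ₀, 1]` the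
matrix `(1−λ)Q + λαQ̂` has the `x⋆`-sign pattern, and `x⋆` is the unique 1-bit-flip local
maximum and unique global maximum of the smoothed objective `g_λ` on `{0,1}^n`. -/
theorem hc_transformation_unimodal_for_large_lambda {n : ℕ} (hn : 0 < n)
    (xs : Fin n → ℝ) (hxs : IsBinary xs)
    (Q : Fin n → Fin n → ℝ) (hQsymm : ∀ i j, Q i j = Q j i)
    (Qhat : Fin n → Fin n → ℝ) (hQhatsymm : ∀ i j, Qhat i j = Qhat j i)
    (hQhat : SignPattern xs Qhat)
    (α : ℝ) (hα : 0 < α) :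
    ∃ lam0 : ℝ, 0 ≤ lam0 ∧ lam0 < 1 ∧
      ∀ lam : ℝ, lam0 < lam → lam ≤ 1 →
        SignPattern xs (fun i j => (1 - lam) * Q i j + lam * α * Qhat i j) ∧
        (∀ k, (1 - lam) * fQ Q (flipBit xs k) + lam * α * fQ Qhat (flipBit xs k)
            ≤ (1 - lam) * fQ Q xs + lam * α * fQ Qhat xs) ∧
        (∀ x : Fin n → ℝ, IsBinary x →
          (∀ k, (1 - lam) * fQ Q (flipBit x k) + lam * α * fQ Qhat (flipBit x k)
              ≤ (1 - lam) * fQ Q x + lam * α * fQ Qhat x) → x = xs) ∧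
        (∀ x : Fin n → ℝ, IsBinary x → x ≠ xs →
          (1 - lam) * fQ Q x + lam * α * fQ Qhat x
            < (1 - lam) * fQ Q xs + lam * α * fQ Qhat xs) := by
  haveI : NeZero n := ⟨hn.ne'⟩
  have hne : (Finset.univ : Finset (Fin n × Fin n)).Nonempty := Finset.univ_nonempty
  set c : ℝ := Finset.univ.inf' hne (fun p : Fin n × Fin n => α * |Qhat p.1 p.2|) with hc
  set B : ℝ := Finset.univ.sup' hne (fun p : Fin n × Fin n => |Q p.1 p.2|) with hBdef
  have hcpos : 0 < c := by
    rw [hc, Finset.lt_inf'_iff]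
    intro p _
    have : Qhat p.1 p.2 ≠ 0 := by
      by_cases h : xs p.1 * xs p.2 = 1
      · exact ((hQhat p.1 p.2).1 h).ne'
      · exact ((hQhat p.1 p.2).2 h).ne
    positivity
  have hBnn : 0 ≤ B := by
    obtain ⟨p, hp⟩ := hne
    exact le_trans (abs_nonneg (Q p.1 p.2)) (Finset.le_sup' (fun p : Fin n × Fin n => |Q p.1 p.2|) hp)
  have hBc : 0 < B + c := by linarith
  refine ⟨B / (B + c), div_nonneg hBnn hBc.le, (div_lt_one hBc).mpr (by linarith), ?_⟩
  intro lam hlam1 hlam2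
  have hlampos : 0 < lam := lt_of_le_of_lt (div_nonneg hBnn hBc.le) hlam1
  have h1lam : 0 ≤ 1 - lam := by linarith
  have hkey : (1 - lam) * B < lam * c := by
    have := (div_lt_iff₀ hBc).mp hlam1
    nlinarith
  have hMsp : SignPattern xs (fun i j => (1 - lam) * Q i j + lam * α * Qhat i j) := by
    intro i j
    have habs : |Q i j| ≤ B := Finset.le_sup' (fun p : Fin n × Fin n => |Q p.1 p.2|)
      (Finset.mem_univ (i, j))
    have hQlb : -B ≤ Q i j := by
      have := neg_abs_le (Q i j); linarith
    have hQub : Q i j ≤ B := le_trans (le_abs_self _) habs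
    constructor
    · intro h
      have hqh : 0 < Qhat i j := (hQhat i j).1 h
      have hcle : c ≤ α * Qhat i j := by
        have := Finset.inf'_le (fun p : Fin n × Fin n => α * |Qhat p.1 p.2|)
          (Finset.mem_univ (i, j))
        rwa [abs_of_pos hqh] at this
      show 0 < (1 - lam) * Q i j + lam * α * Qhat i j
      nlinarith [mul_le_mul_of_nonneg_left hQlb h1lam,
        mul_le_mul_of_nonneg_left hcle hlampos.le]
    · intro h
      have hqh : Qhat i j < 0 := (hQhat i j).2 h
      have hcle : α * Qhat i j ≤ -c := by
        have := Finset.inf'_le (fun p : Fin n × Fin n => α * |Qhat p.1 p.2|)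
          (Finset.mem_univ (i, j))
        rw [abs_of_neg hqh] at this
        nlinarith
      show (1 - lam) * Q i j + lam * α * Qhat i j < 0
      nlinarith [mul_le_mul_of_nonneg_left hQub h1lam,
        mul_le_mul_of_nonneg_left hcle hlampos.le]
  refine ⟨hMsp, ?_, ?_, ?_⟩
  · intro k
    rw [← fQ_combine Q Qhat (1 - lam) (lam * α), ← fQ_combine Q Qhat (1 - lam) (lam * α)]
    have hfne : flipBit xs k ≠ xs := by
      rw [Function.ne_iff]
      refine ⟨k, ?_⟩
      rw [flipBit, Function.update_self]
      rcases hxs k with h | h <;> rw [h] <;> norm_num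
    exact (global_strict hxs hMsp (flipBit_binary hxs k) hfne).le
  · intro x hxb hloc
    by_contra hnex
    obtain ⟨k, _, _, hlt⟩ := improve hxs hMsp hxb hnex
    have := hloc k
    rw [← fQ_combine Q Qhat (1 - lam) (lam * α), ← fQ_combine Q Qhat (1 - lam) (lam * α)] at this
    linarith
  · intro x hxb hnex
    rw [← fQ_combine Q Qhat (1 - lam) (lam * α), ← fQ_combine Q Qhat (1 - lam) (lam * α)]
    exact global_strict hxs hMsp hxb hnex
end
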